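/- Let a, b ∈ Δₙ be strictly positive probability vectors, C ∈ ℝ₊^{n×n}, γ > 0, K := exp(−C/γ). Let (f_k, g_k) be the Sinkhorn iterates starting from arbitrary f₀, g₀ ∈ ℝⁿ, and P_k := diag(e^{f_k/γ}) K diag(e^{g_k/γ}). Then for every even k ≥ 2, h(f_{k+1}, g_{k+1}) − h(f_k, g_k) = γ · KL(a ‖ P_k𝟏ₙ), where P_k𝟏ₙ is the vector of row sums of P_k. -/

import Mathlib

/-- The dual entropic OT objective
`h(f,g) = ⟨f,a⟩ + ⟨g,b⟩ − γ Σ_{i,j} exp((f_i + g_j − C_{ij})/γ)`. -/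
noncomputable def dualObj {n : ℕ} (a b : Fin n → ℝ) (C : Matrix (Fin n) (Fin n) ℝ)
    (γ : ℝ) (f g : Fin n → ℝ) : ℝ :=
  (∑ i, f i * a i) + (∑ j, g j * b j) -
    γ * ∑ i, ∑ j, Real.exp ((f i + g j - C i j) / γ)

/-- The transport plan `P = diag(e^{f/γ}) K diag(e^{g/γ})` with `K = exp(−C/γ)`. -/
noncomputable def plan {n : ℕ} (C : Matrix (Fin n) (Fin n) ℝ) (γ : ℝ)
    (f g : Fin n → ℝ) : Matrix (Fin n) (Fin n) ℝ :=
  fun i j => Real.exp (f i / γ) * Real.exp (-C i j / γ) * Real.exp (g j / γ)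

/-- `(f k, g k)` is the sequence of Sinkhorn iterates (in dual form): for even `k`,
`f (k+1) = γ log a − γ log (K e^{g k / γ})` and `g (k+1) = g k`; for odd `k`,
`f (k+1) = f k` and `g (k+1) = γ log b − γ log (Kᵀ e^{f k / γ})`,
where `K = exp(−C/γ)`. -/
def SinkhornSeq {n : ℕ} (a b : Fin n → ℝ) (C : Matrix (Fin n) (Fin n) ℝ) (γ : ℝ)
    (f g : ℕ → Fin n → ℝ) : Prop :=
  ∀ k : ℕ,
    (Even k →
      f (k+1) = (fun i => γ * Real.log (a i) -
        γ * Real.log (∑ j, Real.exp (-C i j / γ) * Real.exp (g k j / γ))) ∧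
      g (k+1) = g k) ∧
    (¬ Even k →
      f (k+1) = f k ∧
      g (k+1) = (fun j => γ * Real.log (b j) -
        γ * Real.log (∑ i, Real.exp (-C i j / γ) * Real.exp (f k i / γ))))

/-- **One-iteration improvement of Sinkhorn as a KL divergence**: for even `k ≥ 2`,
`h(f_{k+1},g_{k+1}) − h(f_k,g_k) = γ · KL(a ‖ P_k𝟏)`. -/
theorem sinkhorn_one_step_KL {n : ℕ} (a b : Fin n → ℝ)
    (C : Matrix (Fin n) (Fin n) ℝ) (γ : ℝ) (hγ : 0 < γ)
    (ha0 : ∀ i, 0 < a i) (hb0 : ∀ j, 0 < b j)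
    (ha1 : ∑ i, a i = 1) (hb1 : ∑ j, b j = 1)
    (hC : ∀ i j, 0 ≤ C i j)
    (f g : ℕ → Fin n → ℝ) (hiter : SinkhornSeq a b C γ f g)
    (k : ℕ) (hk : 2 ≤ k) (hke : Even k) :
    dualObj a b C γ (f (k+1)) (g (k+1)) - dualObj a b C γ (f k) (g k) =
      γ * ∑ i, a i * Real.log (a i / (∑ j, plan C γ (f k) (g k) i j)) := by
  have hγ' : γ ≠ 0 := ne_of_gt hγ
  obtain ⟨m, rfl⟩ : ∃ m, k = m + 1 := ⟨k - 1, by omega⟩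
  have hmodd : ¬ Even m := by rw [Nat.even_add_one] at hke; exact hke
  obtain ⟨hfm, hgm⟩ := (hiter m).2 hmodd
  obtain ⟨hf1, hg1⟩ := (hiter (m+1)).1 hke
  have hfk : f (m+1) = f m := hfm
  have hgk : ∀ j, g (m+1) j = γ * Real.log (b j) -
      γ * Real.log (∑ i, Real.exp (-C i j / γ) * Real.exp (f (m+1) i / γ)) := by
    intro j
    rw [hfk, hgm]
  have hfk1 : ∀ i, f (m+1+1) i = γ * Real.log (a i) -
      γ * Real.log (∑ j, Real.exp (-C i j / γ) * Real.exp (g (m+1) j / γ)) := by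
    intro i; rw [hf1]
  have hr : ∀ i : Fin n, 0 < ∑ j, Real.exp (-C i j / γ) * Real.exp (g (m+1) j / γ) := by
    intro i
    have : Nonempty (Fin n) := ⟨i⟩
    exact Finset.sum_pos (fun j _ => by positivity) Finset.univ_nonempty
  have hc : ∀ j : Fin n, 0 < ∑ i, Real.exp (-C i j / γ) * Real.exp (f (m+1) i / γ) := by
    intro j
    have : Nonempty (Fin n) := ⟨j⟩
    exact Finset.sum_pos (fun i _ => by positivity) Finset.univ_nonempty
  have hdivγ : ∀ x y : ℝ, (γ * x - γ * y) / γ = x - y := by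
    intro x y; field_simp
  have hexpg : ∀ j, Real.exp (g (m+1) j / γ) =
      b j / (∑ i, Real.exp (-C i j / γ) * Real.exp (f (m+1) i / γ)) := by
    intro j
    rw [hgk j, hdivγ, Real.exp_sub, Real.exp_log (hb0 j), Real.exp_log (hc j)]
  have hexpf1 : ∀ i, Real.exp (f (m+1+1) i / γ) =
      a i / (∑ j, Real.exp (-C i j / γ) * Real.exp (g (m+1) j / γ)) := by
    intro i
    rw [hfk1 i, hdivγ, Real.exp_sub, Real.exp_log (ha0 i), Real.exp_log (hr i)]
  have hrow : ∀ i, ∑ j, plan C γ (f (m+1)) (g (m+1)) i j =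
      Real.exp (f (m+1) i / γ) * (∑ j, Real.exp (-C i j / γ) * Real.exp (g (m+1) j / γ)) := by
    intro i
    rw [Finset.mul_sum]
    exact Finset.sum_congr rfl fun j _ => by simp [plan]; ring
  have hcol : ∀ j, ∑ i, plan C γ (f (m+1)) (g (m+1)) i j = b j := by
    intro j
    have h1 : ∑ i, plan C γ (f (m+1)) (g (m+1)) i j =
        (∑ i, Real.exp (-C i j / γ) * Real.exp (f (m+1) i / γ)) * Real.exp (g (m+1) j / γ) := by
      rw [Finset.sum_mul]
      exact Finset.sum_congr rfl fun i _ => by simp [plan]; ring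
    rw [h1, hexpg j, mul_div_cancel₀ _ (hc j).ne']
  have hS2 : ∑ i, Real.exp (f (m+1) i / γ) *
      (∑ j, Real.exp (-C i j / γ) * Real.exp (g (m+1) j / γ)) = 1 := by
    have h1 : ∑ i, Real.exp (f (m+1) i / γ) *
        (∑ j, Real.exp (-C i j / γ) * Real.exp (g (m+1) j / γ)) =
        ∑ i, ∑ j, plan C γ (f (m+1)) (g (m+1)) i j :=
      Finset.sum_congr rfl fun i _ => (hrow i).symm
    rw [h1]; refine Finset.sum_comm.trans ?_
    simp only [hcol]
    exact hb1
  have hS1 : ∑ i, Real.exp (f (m+1+1) i / γ) *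
      (∑ j, Real.exp (-C i j / γ) * Real.exp (g (m+1) j / γ)) = 1 := by
    rw [← ha1]
    refine Finset.sum_congr rfl fun i _ => ?_
    rw [hexpf1 i, div_mul_cancel₀ _ (hr i).ne']
  have hdouble : ∀ (F : Fin n → ℝ),
      ∑ i, ∑ j, Real.exp ((F i + g (m+1) j - C i j) / γ)
        = ∑ i, Real.exp (F i / γ) * (∑ j, Real.exp (-C i j / γ) * Real.exp (g (m+1) j / γ)) := by
    intro F
    refine Finset.sum_congr rfl fun i _ => ?_
    rw [Finset.mul_sum]
    refine Finset.sum_congr rfl fun j _ => ?_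
    rw [← Real.exp_add, ← Real.exp_add]
    congr 1
    field_simp
    ring
  have key : ∀ i, (f (m+1+1) i - f (m+1) i) * a i
      = γ * (a i * Real.log (a i / (∑ j, plan C γ (f (m+1)) (g (m+1)) i j))) := by
    intro i
    rw [hrow i, hfk1 i]
    have hrne := (hr i).ne'
    have hene : Real.exp (f (m+1) i / γ) ≠ 0 := Real.exp_ne_zero _
    rw [Real.log_div (ha0 i).ne' (by positivity), Real.log_mul hene hrne, Real.log_exp]
    field_simp
    ring
  have hsum : ∑ i, (f (m+1+1) i - f (m+1) i) * a i =
      γ * ∑ i, a i * Real.log (a i / (∑ j, plan C γ (f (m+1)) (g (m+1)) i j)) := by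
    rw [Finset.mul_sum]
    exact Finset.sum_congr rfl fun i _ => key i
  have hAB : (∑ i, f (m+1+1) i * a i) - ∑ i, f (m+1) i * a i
      = ∑ i, (f (m+1+1) i - f (m+1) i) * a i := by
    rw [← Finset.sum_sub_distrib]
    exact Finset.sum_congr rfl fun i _ => (sub_mul _ _ _).symm
  rw [hg1]
  simp only [dualObj]
  rw [hdouble (f (m+1+1)), hdouble (f (m+1)), hS1, hS2]
  linarith [hsum, hAB]
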